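/- Let ε > 0 and let E ⊆ ℝ^d be a Borel set with the property that there exists r > 0 such that for every x ∈ E there is an open ball of radius r contained in E whose closure contains x. Then the number of points of the lattice εℤ^d contained in E is at most C·|E|/(min(ε,r))^d, where |E| denotes the Lebesgue measure of E and C is a constant depending only on d. -/

import Mathlib

open MeasureTheory Set ENNReal

lemma coord_abs_le_dist {d : ℕ} (x y : EuclideanSpace ℝ (Fin d)) (k : Fin d) :
    |x k - y k| ≤ dist x y := by
  rw [EuclideanSpace.dist_eq]
  have h1 : dist (x k) (y k) ^ 2 ≤ ∑ i, dist (x i) (y i) ^ 2 :=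
    Finset.single_le_sum (f := fun i => dist (x i) (y i) ^ 2)
      (fun i _ => sq_nonneg _) (Finset.mem_univ k)
  calc |x k - y k| = Real.sqrt (dist (x k) (y k) ^ 2) := by
        rw [Real.sqrt_sq dist_nonneg, Real.dist_eq]
    _ ≤ _ := Real.sqrt_le_sqrt h1

/-- Counting lattice points in a set that is a union of balls of radius `r`:
`#(E ∩ εℤ^d) ≤ C |E| / (ε ∧ r)^d` with `C = C(d)`. -/
theorem card_lattice_points_le (d : ℕ) :
    ∃ C : ℝ, 0 < C ∧
      ∀ (ε r : ℝ), 0 < ε → 0 < r →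
        ∀ E : Set (EuclideanSpace ℝ (Fin d)), MeasurableSet E →
          (∀ x ∈ E, ∃ c : EuclideanSpace ℝ (Fin d),
            Metric.ball c r ⊆ E ∧ x ∈ closure (Metric.ball c r)) →
          ((E ∩ {x : EuclideanSpace ℝ (Fin d) | ∀ k, ∃ z : ℤ, x k = ε * z}).encard
              : ℝ≥0∞)
            ≤ ENNReal.ofReal C * volume E / ENNReal.ofReal ((min ε r)^d) := by
  set U := volume (Metric.ball (0 : EuclideanSpace ℝ (Fin d)) 1) with hU
  have hUpos : 0 < U := Metric.measure_ball_pos _ _ one_pos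
  have hUlt : U < ⊤ := measure_ball_lt_top
  have hUtpos : 0 < U.toReal := ENNReal.toReal_pos hUpos.ne' hUlt.ne
  refine ⟨4 ^ d / U.toReal, by positivity, ?_⟩
  intro ε r hε hr E hE hball
  set ρ := min ε r with hρdef
  have hρ : 0 < ρ := lt_min hε hr
  have hρε : ρ ≤ ε := min_le_left _ _
  have hρr : ρ ≤ r := min_le_right _ _
  set S := E ∩ {x : EuclideanSpace ℝ (Fin d) | ∀ k, ∃ z : ℤ, x k = ε * z} with hS
  -- step 1: for each x in S there is a ball of radius ρ/4 inside E close to x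
  have step1 : ∀ x, x ∈ S → ∃ y : EuclideanSpace ℝ (Fin d),
      Metric.ball y (ρ / 4) ⊆ E ∧ dist y x ≤ ρ / 4 := by
    intro x hx
    obtain ⟨c, hcE, hxc⟩ := hball x hx.1
    rw [closure_ball c hr.ne', Metric.mem_closedBall] at hxc
    set t : ℝ := ρ / (4 * r) with ht
    have ht0 : 0 ≤ t := by positivity
    have ht1 : t ≤ 1 := by
      rw [ht, div_le_one (by positivity)]
      nlinarith
    have htr : t * r = ρ / 4 := by rw [ht, div_mul_eq_mul_div, mul_div_mul_right _ _ hr.ne']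
    refine ⟨x + t • (c - x), ?_, ?_⟩
    · intro z hz
      apply hcE
      rw [Metric.mem_ball] at hz ⊢
      have hyc : dist (x + t • (c - x)) c ≤ r - ρ / 4 := by
        have heq : x + t • (c - x) - c = (1 - t) • (x - c) := by module
        rw [dist_eq_norm, heq, norm_smul, Real.norm_eq_abs,
          abs_of_nonneg (by linarith)]
        have hxc' : ‖x - c‖ ≤ r := by rwa [← dist_eq_norm]
        nlinarith [norm_nonneg (x - c)]
      calc dist z c ≤ dist z (x + t • (c - x)) + dist (x + t • (c - x)) c :=
            dist_triangle _ _ _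
        _ < ρ / 4 + (r - ρ / 4) := by
            exact add_lt_add_of_lt_of_le hz hyc
        _ = r := by ring
    · have : x + t • (c - x) - x = t • (c - x) := by abel
      rw [dist_eq_norm, this, norm_smul, Real.norm_eq_abs, abs_of_nonneg ht0]
      have hxc' : ‖c - x‖ ≤ r := by rwa [← dist_eq_norm, dist_comm c x]
      nlinarith
  choose! y hy1 hy2 using step1
  -- lattice points are ε-separated
  have hsep : ∀ a ∈ S, ∀ b ∈ S, a ≠ b → ε ≤ dist a b := by
    intro a ha b hb hab
    have : ∃ k, a k ≠ b k := by
      by_contra h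
      push_neg at h
      exact hab (PiLp.ext h)
    obtain ⟨k, hk⟩ := this
    obtain ⟨z, hz⟩ := ha.2 k
    obtain ⟨z', hz'⟩ := hb.2 k
    have hzz : z ≠ z' := by
      rintro rfl; exact hk (hz.trans hz'.symm)
    have h1 : (1 : ℝ) ≤ |(z : ℝ) - z'| := by
      have : (1 : ℤ) ≤ |z - z'| := Int.one_le_abs (sub_ne_zero.mpr hzz)
      have h' : ((1 : ℤ) : ℝ) ≤ ((|z - z'| : ℤ) : ℝ) := by exact_mod_cast this
      push_cast at h'
      linarith
    have h2 : |a k - b k| = ε * |(z : ℝ) - z'| := by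
      rw [hz, hz', ← mul_sub, abs_mul, abs_of_pos hε]
    have := coord_abs_le_dist a b k
    nlinarith
  -- disjointness of the balls
  have hdisj : S.PairwiseDisjoint (fun x => Metric.ball (y x) (ρ / 4)) := by
    intro a ha b hb hab
    apply Metric.ball_disjoint_ball
    have h1 := hy2 a ha
    have h2 := hy2 b hb
    have h3 := hsep a ha b hb hab
    have h4 : dist a b ≤ dist a (y a) + dist (y a) (y b) + dist (y b) b :=
      dist_triangle4 _ _ _ _
    rw [dist_comm a (y a)] at h4
    linarith
  -- countability of S
  have hcnt : S.Countable := by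
    have hsub : S ⊆ Set.range
        (fun z : Fin d → ℤ => (WithLp.toLp 2 (fun k => ε * z k) : EuclideanSpace ℝ (Fin d))) := by
      intro x hx
      choose z hz using hx.2
      exact ⟨z, (PiLp.ext fun k => (hz k).symm)⟩
    exact (Set.countable_range _).mono hsub
  -- volume of each small ball
  have hvol : ∀ x, volume (Metric.ball (y x) (ρ / 4)) =
      ENNReal.ofReal ((ρ / 4) ^ d) * U := by
    intro x
    rw [Measure.addHaar_ball_of_pos volume (y x) (by positivity : (0:ℝ) < ρ / 4),
      finrank_euclideanSpace_fin]
  set v : ℝ≥0∞ := ENNReal.ofReal ((ρ / 4) ^ d) * U with hv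
  -- key estimate
  have key : (S.encard : ℝ≥0∞) * v ≤ volume E := by
    calc (S.encard : ℝ≥0∞) * v = ∑' _ : S, v := (ENNReal.tsum_set_const S v).symm
      _ = ∑' x : S, volume (Metric.ball (y x) (ρ / 4)) := by
          congr 1; ext x; rw [hvol]
      _ = volume (⋃ x ∈ S, Metric.ball (y x) (ρ / 4)) :=
          (measure_biUnion hcnt hdisj (fun b _ => measurableSet_ball)).symm
      _ ≤ volume E := by
          apply measure_mono
          exact Set.iUnion₂_subset (fun x hx => hy1 x hx)
  -- conclude
  have hρd : (0:ℝ) < ρ ^ d := by positivity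
  rw [ENNReal.le_div_iff_mul_le (Or.inl (by simp [ENNReal.ofReal_eq_zero]; linarith))
    (Or.inl ENNReal.ofReal_ne_top)]
  have hCv : ENNReal.ofReal (ρ ^ d) ≤ ENNReal.ofReal (4 ^ d / U.toReal) * v := by
    rw [hv, ← ENNReal.ofReal_toReal hUlt.ne, ← ENNReal.ofReal_mul (by positivity),
      ← ENNReal.ofReal_mul (by positivity)]
    apply ENNReal.ofReal_le_ofReal
    apply le_of_eq
    rw [div_pow]
    field_simp
    ring
    rw [ENNReal.toReal_ofReal hUtpos.le, mul_inv_cancel₀ hUtpos.ne']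
  calc (S.encard : ℝ≥0∞) * ENNReal.ofReal (ρ ^ d)
      ≤ (S.encard : ℝ≥0∞) * (ENNReal.ofReal (4 ^ d / U.toReal) * v) :=
        mul_le_mul_right hCv _
    _ = ENNReal.ofReal (4 ^ d / U.toReal) * ((S.encard : ℝ≥0∞) * v) := by ring
    _ ≤ ENNReal.ofReal (4 ^ d / U.toReal) * volume E := mul_le_mul_right key _
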